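/- arXiv:2105.06312 — 4 statements merged into one kernel-verified Lean document; each statement's English description precedes it below -/
import Mathlib

section
/- Suppose (f_n) is a sequence of convex functions on an open interval A ⊆ ℝ converging pointwise to a function f on A. If each f_n and f are differentiable at a point t₀ ∈ A, then f_n'(t₀) converges to f'(t₀). -/
open Filter Set

/-- If convex functions fₙ on an open interval (a,b) converge pointwise to f, and
each fₙ and f are differentiable at t₀ ∈ (a,b), then fₙ'(t₀) → f'(t₀). -/
theorem stmt7 (a b : ℝ) (f : ℝ → ℝ) (fn : ℕ → ℝ → ℝ) (t₀ : ℝ)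
    (ht₀ : t₀ ∈ Set.Ioo a b)
    (hconv : ∀ n, ConvexOn ℝ (Set.Ioo a b) (fn n))
    (hlim : ∀ t ∈ Set.Ioo a b,
      Filter.Tendsto (fun n => fn n t) Filter.atTop (nhds (f t)))
    (hdn : ∀ n, DifferentiableAt ℝ (fn n) t₀)
    (hdf : DifferentiableAt ℝ f t₀) :
    Filter.Tendsto (fun n => deriv (fn n) t₀) Filter.atTop (nhds (deriv f t₀)) := by
  set L := deriv f t₀ with hL
  rw [Metric.tendsto_atTop]
  intro ε hε
  have hslope : Tendsto (slope f t₀) (nhdsWithin t₀ {t₀}ᶜ) (nhds L) :=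
    hasDerivAt_iff_tendsto_slope.mp hdf.hasDerivAt
  have hmem : {x | |slope f t₀ x - L| < ε / 2} ∈ nhdsWithin t₀ {t₀}ᶜ := by
    have := hslope (Metric.ball_mem_nhds L (show (0:ℝ) < ε / 2 by linarith))
    exact this
  -- pick v > t₀
  have hvex : ({x | |slope f t₀ x - L| < ε / 2} ∩ Ioo t₀ b).Nonempty := by
    have h1 : {x | |slope f t₀ x - L| < ε / 2} ∈ nhdsWithin t₀ (Ioi t₀) :=
      nhdsWithin_mono t₀ (fun x hx => ne_of_gt hx) hmem
    have h2 : Ioo t₀ b ∈ nhdsWithin t₀ (Ioi t₀) :=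
      Ioo_mem_nhdsGT_of_mem ⟨le_refl _, ht₀.2⟩
    exact Filter.nonempty_of_mem (Filter.inter_mem h1 h2)
  have huex : ({x | |slope f t₀ x - L| < ε / 2} ∩ Ioo a t₀).Nonempty := by
    have h1 : {x | |slope f t₀ x - L| < ε / 2} ∈ nhdsWithin t₀ (Iio t₀) :=
      nhdsWithin_mono t₀ (fun x hx => ne_of_lt hx) hmem
    have h2 : Ioo a t₀ ∈ nhdsWithin t₀ (Iio t₀) :=
      Ioo_mem_nhdsLT_of_mem ⟨ht₀.1, le_refl _⟩
    exact Filter.nonempty_of_mem (Filter.inter_mem h1 h2)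
  obtain ⟨v, hv1, hv2⟩ := hvex
  obtain ⟨u, hu1, hu2⟩ := huex
  have hvab : v ∈ Ioo a b := ⟨ht₀.1.trans hv2.1, hv2.2⟩
  have huab : u ∈ Ioo a b := ⟨hu2.1, hu2.2.trans ht₀.2⟩
  -- slopes of fn converge to slopes of f
  have hslopev : Tendsto (fun n => slope (fn n) t₀ v) atTop (nhds (slope f t₀ v)) := by
    simp only [slope_def_field, div_eq_mul_inv]
    exact (((hlim v hvab).sub (hlim t₀ ht₀)).mul tendsto_const_nhds)
  have hslopeu : Tendsto (fun n => slope (fn n) t₀ u) atTop (nhds (slope f t₀ u)) := by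
    simp only [slope_def_field, div_eq_mul_inv]
    exact (((hlim u huab).sub (hlim t₀ ht₀)).mul tendsto_const_nhds)
  have hv3 : ∀ᶠ n in atTop, |slope (fn n) t₀ v - slope f t₀ v| < ε / 2 := by
    have := Metric.tendsto_atTop.mp hslopev (ε / 2) (by linarith)
    obtain ⟨N, hN⟩ := this
    exact eventually_atTop.mpr ⟨N, fun n hn => by simpa [Real.dist_eq] using hN n hn⟩
  have hu3 : ∀ᶠ n in atTop, |slope (fn n) t₀ u - slope f t₀ u| < ε / 2 := by
    have := Metric.tendsto_atTop.mp hslopeu (ε / 2) (by linarith)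
    obtain ⟨N, hN⟩ := this
    exact eventually_atTop.mpr ⟨N, fun n hn => by simpa [Real.dist_eq] using hN n hn⟩
  rw [← eventually_atTop]
  filter_upwards [hv3, hu3] with n hnv hnu
  have hub : deriv (fn n) t₀ ≤ slope (fn n) t₀ v :=
    (hconv n).deriv_le_slope ht₀ hvab hv2.1 (hdn n)
  have hlb : slope (fn n) t₀ u ≤ deriv (fn n) t₀ := by
    rw [slope_comm]
    exact (hconv n).slope_le_deriv huab ht₀ hu2.2 (hdn n)
  have h1 : slope (fn n) t₀ v < L + ε := by
    have := abs_lt.mp hnv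
    have := abs_lt.mp (show |slope f t₀ v - L| < ε / 2 from hv1)
    linarith
  have h2 : L - ε < slope (fn n) t₀ u := by
    have := abs_lt.mp hnu
    have := abs_lt.mp (show |slope f t₀ u - L| < ε / 2 from hu1)
    linarith
  rw [Real.dist_eq, abs_lt]
  constructor <;> linarith
end

section
/- Let (Y_n) be real random variables with densities ℓ_n(y) ∝ exp(−(81/64)y⁴ + k y⁵/√n)·1_{|y| ≤ n^{1/2−δ}} / √((u* + y/√n)(1 − u* − y/√n)), where u* ∈ (0,1), k ∈ ℝ, δ ∈ (0, 3/8). Then Y_n converges in distribution to the random variable Y with density ℓ(y) ∝ e^{−(81/64)y⁴}, and E|Y_n| → E|Y|. -/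
set_option maxHeartbeats 1600000


open MeasureTheory

/-- Unnormalized density exp(−(81/64)y⁴ + k y⁵/√n)/√((u*+y/√n)(1−u*−y/√n)) on
{|y| ≤ n^{1/2−δ}}. -/
noncomputable def phiC (u k δ : ℝ) (n : ℕ) (y : ℝ) : ℝ :=
  if |y| ≤ (n : ℝ) ^ ((1 : ℝ) / 2 - δ) then
    Real.exp (-(81 / 64) * y ^ 4 + k * y ^ 5 / Real.sqrt n) /
      Real.sqrt ((u + y / Real.sqrt n) * (1 - u - y / Real.sqrt n))
  else 0

/-- The normalized density ℓₙ. -/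
noncomputable def ellC (u k δ : ℝ) (n : ℕ) (y : ℝ) : ℝ :=
  phiC u k δ n y / ∫ t, phiC u k δ n t

/-- Limiting density ℓ(y) ∝ e^{−(81/64)y⁴}. -/
noncomputable def ellLimC (y : ℝ) : ℝ :=
  Real.exp (-(81 / 64) * y ^ 4) / ∫ t : ℝ, Real.exp (-(81 / 64) * t ^ 4)

lemma integrable_one_add_abs_exp {a : ℝ} (ha : 0 < a) :
    Integrable (fun y : ℝ => (1 + |y|) * Real.exp (-a * y ^ 4)) := by
  have h2 : Integrable (fun y : ℝ =>
      Real.exp (a + 1 / (2 * a)) * Real.exp (-(a / 2) * y ^ 2)) :=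
    (integrable_exp_neg_mul_sq (by positivity)).const_mul _
  refine h2.mono' ((measurable_const.add measurable_abs).mul
    (by fun_prop : Measurable fun y : ℝ => Real.exp (-a * y ^ 4))).aestronglyMeasurable
    (Filter.Eventually.of_forall fun y => ?_)
  have h1 : (1 : ℝ) + |y| ≤ Real.exp |y| := by
    have := Real.add_one_le_exp |y|; linarith
  have hb : |y| - a * y ^ 4 ≤ a + 1 / (2 * a) - (a / 2) * y ^ 2 := by
    have hy4 : y ^ 4 ≥ y ^ 2 - 1 := by nlinarith [sq_nonneg (y ^ 2 - 1), sq_nonneg y]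
    have habs : |y| ≤ (a / 2) * y ^ 2 + 1 / (2 * a) := by
      have h2a : (0:ℝ) < 2 * a := by linarith
      have hkey : 2 * a * |y| ≤ 2 * a * ((a / 2) * y ^ 2 + 1 / (2 * a)) := by
        have e : 2 * a * ((a / 2) * y ^ 2 + 1 / (2 * a)) = a ^ 2 * y ^ 2 + 1 := by
          field_simp
        rw [e]; nlinarith [sq_nonneg (a * |y| - 1), sq_abs y]
      exact le_of_mul_le_mul_left hkey h2a
    nlinarith [sq_nonneg y]
  have key : (1 + |y|) * Real.exp (-a * y ^ 4) ≤
      Real.exp (a + 1 / (2 * a)) * Real.exp (-(a / 2) * y ^ 2) := by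
    calc (1 + |y|) * Real.exp (-a * y ^ 4)
        ≤ Real.exp |y| * Real.exp (-a * y ^ 4) :=
          mul_le_mul_of_nonneg_right h1 (Real.exp_pos _).le
      _ = Real.exp (|y| - a * y ^ 4) := by rw [← Real.exp_add]; ring_nf
      _ ≤ Real.exp (a + 1 / (2 * a) - (a / 2) * y ^ 2) := Real.exp_le_exp.mpr hb
      _ = Real.exp (a + 1 / (2 * a)) * Real.exp (-(a / 2) * y ^ 2) := by
          rw [← Real.exp_add]; ring_nf
  rw [Real.norm_eq_abs, abs_of_nonneg (by positivity)]
  exact key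

lemma phiC_meas (u k δ : ℝ) (n : ℕ) : Measurable (phiC u k δ n) := by
  unfold phiC
  exact Measurable.ite (measurableSet_le (by fun_prop) measurable_const)
    (by fun_prop) measurable_const

lemma tendsto_aux (u k δ : ℝ) (hu : u ∈ Set.Ioo (0 : ℝ) 1)
    (hδ : δ ∈ Set.Ioo (0 : ℝ) (3 / 8))
    (w : ℝ → ℝ) (hw : Measurable w) (M : ℝ) (hM0 : 0 ≤ M)
    (hM : ∀ y, |w y| ≤ M * (1 + |y|)) :
    Filter.Tendsto (fun n : ℕ => ∫ y, w y * phiC u k δ n y) Filter.atTop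
      (nhds ((∫ y, w y * Real.exp (-(81 / 64) * y ^ 4)) / Real.sqrt (u * (1 - u)))) := by
  obtain ⟨hu0, hu1⟩ := hu
  obtain ⟨hδ0, hδ1⟩ := hδ
  set s0 := Real.sqrt (u * (1 - u)) with hs0def
  have hs0 : 0 < s0 := Real.sqrt_pos.mpr (by nlinarith)
  have hIeq : ∫ y, w y * (Real.exp (-(81 / 64) * y ^ 4) / s0)
      = (∫ y, w y * Real.exp (-(81 / 64) * y ^ 4)) / s0 := by
    simp_rw [← mul_div_assoc]
    exact integral_div s0 _
  rw [← hIeq]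
  set ε := min (min (u / 2) ((1 - u) / 2)) (81 / (128 * (|k| + 1))) with hεdef
  have hε : 0 < ε := by
    refine lt_min (lt_min (by linarith) (by linarith)) (by positivity)
  have hnd : Filter.Tendsto (fun n : ℕ => (n : ℝ) ^ (-δ)) Filter.atTop (nhds 0) :=
    (tendsto_rpow_neg_atTop hδ0).comp tendsto_natCast_atTop_atTop
  refine tendsto_integral_filter_of_dominated_convergence
    (fun y => (2 / s0) * (M * ((1 + |y|) * Real.exp (-(81 / 128) * y ^ 4))))
    (Filter.Eventually.of_forall fun n =>
      ((hw.mul (phiC_meas u k δ n)).aestronglyMeasurable)) ?_ ?_ ?_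
  · -- bound
    filter_upwards [hnd.eventually_lt_const hε, Filter.eventually_ge_atTop 1]
      with n hnε hn1
    refine Filter.Eventually.of_forall fun y => ?_
    have hbnd_nonneg : 0 ≤ (2 / s0) * (M * ((1 + |y|) * Real.exp (-(81 / 128) * y ^ 4))) := by
      positivity
    rw [phiC]
    split_ifs with hy
    · have hn0 : (0 : ℝ) < n := by exact_mod_cast hn1
      have hsn : 0 < Real.sqrt n := Real.sqrt_pos.mpr hn0
      have hyd : |y| / Real.sqrt n ≤ (n : ℝ) ^ (-δ) := by
        rw [div_le_iff₀ hsn]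
        calc |y| ≤ (n : ℝ) ^ ((1 : ℝ) / 2 - δ) := hy
          _ = (n : ℝ) ^ (-δ) * Real.sqrt n := by
              rw [Real.sqrt_eq_rpow, ← Real.rpow_add hn0]; ring_nf
      have hεu : ε ≤ u / 2 := le_trans (min_le_left _ _) (min_le_left _ _)
      have hεu1 : ε ≤ (1 - u) / 2 := le_trans (min_le_left _ _) (min_le_right _ _)
      have hεk : ε ≤ 81 / (128 * (|k| + 1)) := min_le_right _ _
      have habs : |y / Real.sqrt n| < ε := by
        rw [abs_div, abs_of_pos hsn]; exact lt_of_le_of_lt hyd hnε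
      have habs' := abs_lt.mp habs
      have h1 : u / 2 ≤ u + y / Real.sqrt n := by linarith [habs'.1]
      have h2 : (1 - u) / 2 ≤ 1 - u - y / Real.sqrt n := by linarith [habs'.2]
      have hsP : s0 / 2 ≤ Real.sqrt ((u + y / Real.sqrt n) * (1 - u - y / Real.sqrt n)) := by
        refine Real.le_sqrt_of_sq_le ?_
        have hsq : s0 ^ 2 = u * (1 - u) := Real.sq_sqrt (by nlinarith)
        nlinarith [hsq, mul_le_mul h1 h2 (by linarith) (by linarith)]
      have hk1 : |k| * (n : ℝ) ^ (-δ) ≤ 81 / 128 := by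
        have h3 : |k| * (n : ℝ) ^ (-δ) ≤ |k| * (81 / (128 * (|k| + 1))) :=
          mul_le_mul_of_nonneg_left (le_trans hnε.le hεk) (abs_nonneg k)
        have h4 : |k| * (81 / (128 * (|k| + 1))) ≤ 81 / 128 := by
          rw [mul_div_assoc', div_le_div_iff₀ (by positivity) (by norm_num)]
          nlinarith [abs_nonneg k]
        linarith
      have hExp : -(81 / 64) * y ^ 4 + k * y ^ 5 / Real.sqrt n ≤ -(81 / 128) * y ^ 4 := by
        have h5 : k * y ^ 5 / Real.sqrt n ≤ |k| * (n : ℝ) ^ (-δ) * y ^ 4 := by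
          have : |k * y ^ 5 / Real.sqrt n| ≤ |k| * (n : ℝ) ^ (-δ) * y ^ 4 := by
            rw [abs_div, abs_mul, abs_of_pos hsn]
            rw [show |y ^ 5| = y ^ 4 * |y| by
              rw [show y ^ 5 = y ^ 4 * y by ring, abs_mul, abs_of_nonneg (by positivity)]]
            rw [show |k| * (y ^ 4 * |y|) / Real.sqrt n
                = |k| * y ^ 4 * (|y| / Real.sqrt n) by ring]
            calc |k| * y ^ 4 * (|y| / Real.sqrt n)
                ≤ |k| * y ^ 4 * (n : ℝ) ^ (-δ) :=
                  mul_le_mul_of_nonneg_left hyd (by positivity)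
              _ = |k| * (n : ℝ) ^ (-δ) * y ^ 4 := by ring
          linarith [le_abs_self (k * y ^ 5 / Real.sqrt n)]
        have h6 : |k| * (n : ℝ) ^ (-δ) * y ^ 4 ≤ (81 / 128) * y ^ 4 :=
          mul_le_mul_of_nonneg_right hk1 (by positivity)
        linarith
      rw [Real.norm_eq_abs, abs_mul,
        abs_of_nonneg (div_nonneg (Real.exp_pos _).le (Real.sqrt_nonneg _))]
      have hdiv : Real.exp (-(81 / 64) * y ^ 4 + k * y ^ 5 / Real.sqrt n) /
          Real.sqrt ((u + y / Real.sqrt n) * (1 - u - y / Real.sqrt n))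
          ≤ Real.exp (-(81 / 128) * y ^ 4) / (s0 / 2) :=
        div_le_div₀ (Real.exp_pos _).le (Real.exp_le_exp.mpr hExp) (by positivity) hsP
      calc |w y| * (Real.exp (-(81 / 64) * y ^ 4 + k * y ^ 5 / Real.sqrt n) /
            Real.sqrt ((u + y / Real.sqrt n) * (1 - u - y / Real.sqrt n)))
          ≤ (M * (1 + |y|)) * (Real.exp (-(81 / 128) * y ^ 4) / (s0 / 2)) := by
            refine mul_le_mul (hM y) hdiv ?_ ?_
            · positivity
            · have := (abs_nonneg (w y)).trans (hM y); exact this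
        _ = (2 / s0) * (M * ((1 + |y|) * Real.exp (-(81 / 128) * y ^ 4))) := by
            field_simp
    · rw [mul_zero, norm_zero]; exact hbnd_nonneg
  · exact (((integrable_one_add_abs_exp (by norm_num : (0:ℝ) < 81/128)).const_mul
      M).const_mul (2 / s0))
  · refine Filter.Eventually.of_forall fun y => ?_
    have hbig : Filter.Tendsto (fun n : ℕ => (n : ℝ) ^ ((1 : ℝ) / 2 - δ))
        Filter.atTop Filter.atTop :=
      (tendsto_rpow_atTop (by linarith)).comp tendsto_natCast_atTop_atTop
    have hev : ∀ᶠ n : ℕ in Filter.atTop, |y| ≤ (n : ℝ) ^ ((1 : ℝ) / 2 - δ) :=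
      hbig.eventually_ge_atTop |y|
    have hsq : Filter.Tendsto (fun n : ℕ => Real.sqrt n) Filter.atTop Filter.atTop := by
      have : Filter.Tendsto (fun n : ℕ => ((n : ℝ)) ^ ((1:ℝ)/2)) Filter.atTop Filter.atTop :=
        (tendsto_rpow_atTop (by norm_num)).comp tendsto_natCast_atTop_atTop
      exact this.congr fun n => (Real.sqrt_eq_rpow _).symm
    have hinv : Filter.Tendsto (fun n : ℕ => (Real.sqrt n)⁻¹) Filter.atTop (nhds 0) :=
      hsq.inv_tendsto_atTop
    have hy0 : Filter.Tendsto (fun n : ℕ => y / Real.sqrt n) Filter.atTop (nhds 0) := by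
      simpa [div_eq_mul_inv] using hinv.const_mul y
    have hE : Filter.Tendsto
        (fun n : ℕ => -(81 / 64) * y ^ 4 + k * y ^ 5 / Real.sqrt n)
        Filter.atTop (nhds (-(81 / 64) * y ^ 4)) := by
      have h5 : Filter.Tendsto (fun n : ℕ => k * y ^ 5 / Real.sqrt n)
          Filter.atTop (nhds 0) := by
        simpa [div_eq_mul_inv] using hinv.const_mul (k * y ^ 5)
      simpa using tendsto_const_nhds.add h5
    have hP : Filter.Tendsto
        (fun n : ℕ => Real.sqrt ((u + y / Real.sqrt n) * (1 - u - y / Real.sqrt n)))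
        Filter.atTop (nhds s0) := by
      have : Filter.Tendsto
          (fun n : ℕ => (u + y / Real.sqrt n) * (1 - u - y / Real.sqrt n))
          Filter.atTop (nhds (u * (1 - u))) := by
        have h := ((tendsto_const_nhds (x := u) (f := Filter.atTop)).add hy0).mul
          ((tendsto_const_nhds (x := (1 - u : ℝ)) (f := Filter.atTop)).sub hy0)
        simpa using h
      exact this.sqrt
    have hmain : Filter.Tendsto
        (fun n : ℕ => w y * (Real.exp (-(81 / 64) * y ^ 4 + k * y ^ 5 / Real.sqrt n) /
          Real.sqrt ((u + y / Real.sqrt n) * (1 - u - y / Real.sqrt n))))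
        Filter.atTop (nhds (w y * (Real.exp (-(81 / 64) * y ^ 4) / s0))) :=
      tendsto_const_nhds.mul (((Real.continuous_exp.tendsto _).comp hE).div hP hs0.ne')
    refine hmain.congr' ?_
    filter_upwards [hev] with n hn
    rw [phiC, if_pos hn]

lemma integral_mul_ell_eq (v : ℝ → ℝ) (u k δ : ℝ) (n : ℕ) :
    ∫ y, v y * ellC u k δ n y
      = (∫ y, v y * phiC u k δ n y) / ∫ t, phiC u k δ n t := by
  simp_rw [ellC, ← mul_div_assoc]
  exact integral_div _ _

lemma integral_mul_ellLim_eq (v : ℝ → ℝ) :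
    ∫ y, v y * ellLimC y
      = (∫ y, v y * Real.exp (-(81 / 64) * y ^ 4)) /
          ∫ t : ℝ, Real.exp (-(81 / 64) * t ^ 4) := by
  simp_rw [ellLimC, ← mul_div_assoc]
  exact integral_div _ _

/-- Yₙ with density ℓₙ converges in distribution to Y with density ∝ e^{−(81/64)y⁴},
and E|Yₙ| → E|Y|. -/
theorem stmt15 (u k δ : ℝ) (hu : u ∈ Set.Ioo (0 : ℝ) 1)
    (hδ : δ ∈ Set.Ioo (0 : ℝ) (3 / 8)) :
    (∀ f : BoundedContinuousFunction ℝ ℝ,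
        Filter.Tendsto (fun n : ℕ => ∫ y, f y * ellC u k δ n y) Filter.atTop
          (nhds (∫ y, f y * ellLimC y))) ∧
      Filter.Tendsto (fun n : ℕ => ∫ y, |y| * ellC u k δ n y) Filter.atTop
        (nhds (∫ y, |y| * ellLimC y)) := by
  have hs0 : 0 < Real.sqrt (u * (1 - u)) :=
    Real.sqrt_pos.mpr (by nlinarith [hu.1, hu.2])
  set s0 := Real.sqrt (u * (1 - u)) with hs0def
  -- integrability and positivity of limit integral
  have hIint : Integrable (fun y : ℝ => Real.exp (-(81 / 64) * y ^ 4)) := by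
    refine (integrable_one_add_abs_exp (by norm_num : (0:ℝ) < 81/64)).mono'
      (by fun_prop : Measurable fun y : ℝ => Real.exp (-(81/64) * y ^ 4)).aestronglyMeasurable
      (Filter.Eventually.of_forall fun y => ?_)
    rw [Real.norm_eq_abs, abs_of_nonneg (Real.exp_pos _).le]
    nlinarith [Real.exp_pos (-(81 / 64 : ℝ) * y ^ 4), abs_nonneg y]
  have hIpos : 0 < ∫ t : ℝ, Real.exp (-(81 / 64) * t ^ 4) :=
    integral_exp_pos hIint
  set I := ∫ t : ℝ, Real.exp (-(81 / 64) * t ^ 4) with hIdef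
  -- denominator convergence
  have hden : Filter.Tendsto (fun n : ℕ => ∫ t, phiC u k δ n t) Filter.atTop
      (nhds (I / s0)) := by
    have h := tendsto_aux u k δ hu hδ (fun _ => (1 : ℝ)) measurable_const 1 zero_le_one
      (fun y => by rw [abs_one]; nlinarith [abs_nonneg y])
    simp only [one_mul] at h
    exact h
  have hlim_ne : I / s0 ≠ 0 := by positivity
  have key : ∀ v : ℝ → ℝ, Measurable v → ∀ M : ℝ, 0 ≤ M → (∀ y, |v y| ≤ M * (1 + |y|)) →
      Filter.Tendsto (fun n : ℕ => ∫ y, v y * ellC u k δ n y) Filter.atTop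
        (nhds (∫ y, v y * ellLimC y)) := by
    intro v hv M hM0 hM
    have hnum := tendsto_aux u k δ hu hδ v hv M hM0 hM
    have hdiv := hnum.div hden hlim_ne
    have heq : ((∫ y, v y * Real.exp (-(81 / 64) * y ^ 4)) / s0) / (I / s0)
        = (∫ y, v y * Real.exp (-(81 / 64) * y ^ 4)) / I := by
      field_simp
    rw [heq] at hdiv
    rw [integral_mul_ellLim_eq v]
    refine hdiv.congr fun n => ?_
    rw [integral_mul_ell_eq]
    rfl
  constructor
  · intro f
    refine key f f.continuous.measurable ‖f‖ (norm_nonneg f) fun y => ?_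
    have h1 : |f y| ≤ ‖f‖ := by
      rw [← Real.norm_eq_abs]; exact f.norm_coe_le_norm y
    nlinarith [abs_nonneg y, norm_nonneg f]
  · refine key (fun y => |y|) (by fun_prop) 1 zero_le_one fun y => ?_
    rw [abs_abs]; nlinarith [abs_nonneg y]
end

section
/- Let (X_n) be real random variables with densities ℓ_n(x) ∝ exp(−c x² + k x³/n)·1_{|x| ≤ n^{1−δ}} / √((u* + x/n)(1 − u* − x/n)), where c > 0, k ∈ ℝ, u* ∈ (0,1), δ ∈ (0,1). Then X_n converges in distribution to a centered Gaussian with variance 1/(2c), and E(X_n) → 0 and E|X_n| → E|N(0,1/(2c))|. -/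
open MeasureTheory

/-- Unnormalized density exp(−c x² + k x³/n)/√((u*+x/n)(1−u*−x/n)) on {|x| ≤ n^{1−δ}}. -/
noncomputable def phiG (u c k δ : ℝ) (n : ℕ) (x : ℝ) : ℝ :=
  if |x| ≤ (n : ℝ) ^ ((1 : ℝ) - δ) then
    Real.exp (-c * x ^ 2 + k * x ^ 3 / n) /
      Real.sqrt ((u + x / n) * (1 - u - x / n))
  else 0

/-- The normalized density ℓₙ. -/
noncomputable def ellG (u c k δ : ℝ) (n : ℕ) (x : ℝ) : ℝ :=
  phiG u c k δ n x / ∫ t, phiG u c k δ n t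

/-- Centered Gaussian density with variance 1/(2c): √(c/π)·e^{−c x²}. -/
noncomputable def gaussDens (c : ℝ) (x : ℝ) : ℝ :=
  Real.sqrt (c / Real.pi) * Real.exp (-c * x ^ 2)

lemma phiG_nonneg (u c k δ : ℝ) (n : ℕ) (x : ℝ) : 0 ≤ phiG u c k δ n x := by
  unfold phiG
  split
  · exact div_nonneg (Real.exp_pos _).le (Real.sqrt_nonneg _)
  · exact le_refl 0

lemma phiG_meas (u c k δ : ℝ) (n : ℕ) : Measurable (phiG u c k δ n) := by
  unfold phiG
  apply Measurable.ite
  · exact measurableSet_le continuous_abs.measurable measurable_const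
  · exact (Real.measurable_exp.comp (by fun_prop)).div
      (Real.continuous_sqrt.measurable.comp (by fun_prop))
  · exact measurable_const

open Filter in
lemma phiG_tendsto {u c k δ : ℝ} (hu : u ∈ Set.Ioo (0 : ℝ) 1)
    (hδ : δ ∈ Set.Ioo (0 : ℝ) 1) (x : ℝ) :
    Tendsto (fun n : ℕ => phiG u c k δ n x) atTop
      (nhds (Real.exp (-c * x ^ 2) / Real.sqrt (u * (1 - u)))) := by
  have hpow : Tendsto (fun n : ℕ => (n : ℝ) ^ ((1 : ℝ) - δ)) atTop atTop :=
    (tendsto_rpow_atTop (by linarith [hδ.2] : (0:ℝ) < 1 - δ)).comp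
      tendsto_natCast_atTop_atTop
  have hev : ∀ᶠ n : ℕ in atTop, |x| ≤ (n : ℝ) ^ ((1 : ℝ) - δ) :=
    hpow.eventually_ge_atTop |x|
  have h2 : Tendsto (fun n : ℕ => k * x ^ 3 / (n : ℝ)) atTop (nhds 0) :=
    tendsto_const_div_atTop_nhds_zero_nat _
  have h3 : Tendsto (fun n : ℕ => x / (n : ℝ)) atTop (nhds 0) :=
    tendsto_const_div_atTop_nhds_zero_nat _
  have hnum : Tendsto (fun n : ℕ => Real.exp (-c * x ^ 2 + k * x ^ 3 / (n : ℝ)))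
      atTop (nhds (Real.exp (-c * x ^ 2))) := by
    have := (Real.continuous_exp.tendsto (-c * x ^ 2 + 0)).comp
      (Tendsto.const_add (-c * x ^ 2) h2)
    simpa [Function.comp_def] using this
  have hden : Tendsto (fun n : ℕ => Real.sqrt ((u + x / (n:ℝ)) * (1 - u - x / (n:ℝ))))
      atTop (nhds (Real.sqrt (u * (1 - u)))) := by
    have h4 : Tendsto (fun n : ℕ => (u + x / (n:ℝ)) * (1 - u - x / (n:ℝ)))
        atTop (nhds ((u + 0) * (1 - u - 0))) :=
      (Tendsto.const_add u h3).mul (Tendsto.sub tendsto_const_nhds h3)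
    have := (Real.continuous_sqrt.tendsto ((u + 0) * (1 - u - 0))).comp h4
    simpa [Function.comp_def] using this
  have hsne : Real.sqrt (u * (1 - u)) ≠ 0 := by
    have : 0 < u * (1 - u) := mul_pos hu.1 (by linarith [hu.2])
    positivity
  refine Tendsto.congr' ?_ (hnum.div hden hsne)
  filter_upwards [hev] with n hn
  simp [phiG, hn]

open Filter Real in
lemma phiG_bound {u c k δ : ℝ} (hu : u ∈ Set.Ioo (0 : ℝ) 1) (hc : 0 < c)
    (hδ : δ ∈ Set.Ioo (0 : ℝ) 1) :
    ∀ᶠ n : ℕ in atTop, ∀ x,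
      phiG u c k δ n x ≤ (2 / Real.sqrt (u * (1 - u))) * Real.exp (-(c/2) * x ^ 2) := by
  have hu1 : (0:ℝ) < 1 - u := by linarith [hu.2]
  have hsu : (0:ℝ) < Real.sqrt (u * (1 - u)) :=
    Real.sqrt_pos.mpr (mul_pos hu.1 hu1)
  have hnd : Tendsto (fun n : ℕ => (n : ℝ) ^ (-δ)) atTop (nhds 0) :=
    (tendsto_rpow_neg_atTop hδ.1).comp tendsto_natCast_atTop_atTop
  have hε : (0:ℝ) < min (c / (2 * (|k| + 1))) (min (u/2) ((1-u)/2)) := by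
    have hk1 : (0:ℝ) < |k| + 1 := by positivity
    exact lt_min (by positivity) (lt_min (by linarith [hu.1]) (by linarith))
  have hev1 : ∀ᶠ n : ℕ in atTop,
      (n : ℝ) ^ (-δ) < min (c / (2 * (|k| + 1))) (min (u/2) ((1-u)/2)) :=
    hnd.eventually_lt_const hε
  filter_upwards [hev1, eventually_ge_atTop 1] with n hn hn1 x
  have hnpos : (0:ℝ) < n := by exact_mod_cast hn1
  by_cases hx : |x| ≤ (n : ℝ) ^ ((1 : ℝ) - δ)
  swap
  · simp only [phiG, hx, if_false]
    positivity
  simp only [phiG, hx, if_true]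
  set ε : ℝ := (n : ℝ) ^ (-δ) with hεdef
  have hεnn : 0 ≤ ε := rpow_nonneg hnpos.le _
  have hxn : |x| / n ≤ ε := by
    rw [div_le_iff₀ hnpos]
    calc |x| ≤ (n : ℝ) ^ ((1 : ℝ) - δ) := hx
      _ = ε * n := by
        rw [hεdef, show ((1:ℝ) - δ) = -δ + 1 by ring, Real.rpow_add hnpos,
          Real.rpow_one]
  have hklt : ε < c / (2 * (|k| + 1)) := (lt_min_iff.mp hn).1
  have hεu : ε ≤ u / 2 := ((lt_min_iff.mp hn).2.trans_le (min_le_left _ _)).le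
  have hεu' : ε ≤ (1 - u) / 2 := ((lt_min_iff.mp hn).2.trans_le (min_le_right _ _)).le
  have hk : ε * |k| ≤ c / 2 := by
    have hk1 : (0:ℝ) < |k| + 1 := by positivity
    have : ε * (|k| + 1) ≤ c / 2 := by
      have h2 : ε ≤ c / 2 / (|k| + 1) := by rw [div_div]; exact hklt.le
      calc ε * (|k| + 1) ≤ (c / 2 / (|k| + 1)) * (|k| + 1) :=
            mul_le_mul_of_nonneg_right h2 (by positivity)
        _ = c / 2 := by field_simp
    nlinarith [abs_nonneg k]
  -- exponent bound
  have habs3 : |x| ^ 3 = x ^ 2 * |x| := by rw [pow_succ, sq_abs]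
  have hexp : -c * x ^ 2 + k * x ^ 3 / n ≤ -(c/2) * x ^ 2 := by
    have h1 : k * x ^ 3 / n ≤ |k| * (x ^ 2 * (|x| / n)) := by
      calc k * x ^ 3 / n ≤ |k * x ^ 3 / n| := le_abs_self _
        _ = |k| * (x ^ 2 * (|x| / n)) := by
            rw [abs_div, abs_mul, abs_pow, abs_of_pos hnpos, habs3]
            ring
    have h2 : |k| * (x ^ 2 * (|x| / n)) ≤ |k| * (x ^ 2 * ε) :=
      mul_le_mul_of_nonneg_left
        (mul_le_mul_of_nonneg_left hxn (sq_nonneg x)) (abs_nonneg k)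
    nlinarith [sq_nonneg x, abs_nonneg k]
  -- denominator bound
  have hxn' : |x / n| ≤ ε := by rwa [abs_div, abs_of_pos hnpos]
  have hd1 : u / 2 ≤ u + x / n := by
    have := neg_abs_le (x / n)
    have := abs_le.mp hxn'
    linarith [this.1]
  have hd2 : (1 - u) / 2 ≤ 1 - u - x / n := by
    have := abs_le.mp hxn'
    linarith [this.2]
  have hprod : u * (1 - u) / 4 ≤ (u + x / n) * (1 - u - x / n) := by
    nlinarith [hu.1, hu1]
  have hsq : Real.sqrt (u * (1 - u)) / 2 ≤
      Real.sqrt ((u + x / n) * (1 - u - x / n)) := by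
    have h := Real.sqrt_le_sqrt hprod
    rwa [show u * (1 - u) / 4 = u * (1 - u) / 2 ^ 2 by norm_num,
      Real.sqrt_div (mul_nonneg hu.1.le hu1.le),
      Real.sqrt_sq (by norm_num : (0:ℝ) ≤ 2)] at h
  calc Real.exp (-c * x ^ 2 + k * x ^ 3 / n) /
        Real.sqrt ((u + x / n) * (1 - u - x / n))
      ≤ Real.exp (-(c/2) * x ^ 2) / (Real.sqrt (u * (1 - u)) / 2) :=
        div_le_div₀ (Real.exp_pos _).le (Real.exp_le_exp.mpr hexp)
          (div_pos hsu two_pos) hsq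
    _ = (2 / Real.sqrt (u * (1 - u))) * Real.exp (-(c/2) * x ^ 2) := by
        field_simp

open Filter in
lemma phiG_main {u c k δ : ℝ} (hu : u ∈ Set.Ioo (0 : ℝ) 1) (hc : 0 < c)
    (hδ : δ ∈ Set.Ioo (0 : ℝ) 1) (g : ℝ → ℝ) (hg : Measurable g) (M : ℝ)
    (hM : ∀ x, |g x| ≤ M * (1 + |x|)) :
    Tendsto (fun n : ℕ => ∫ x, g x * phiG u c k δ n x) atTop
      (nhds (∫ x, g x * (Real.exp (-c * x ^ 2) / Real.sqrt (u * (1 - u))))) := by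
  have hc2 : (0:ℝ) < c / 2 := by linarith
  set C : ℝ := 2 / Real.sqrt (u * (1 - u)) with hC
  have hCnn : 0 ≤ C := by positivity
  apply tendsto_integral_filter_of_dominated_convergence
    (fun x => M * (1 + |x|) * (C * Real.exp (-(c/2) * x ^ 2)))
  · exact Eventually.of_forall fun n =>
      (hg.mul (phiG_meas u c k δ n)).aestronglyMeasurable
  · filter_upwards [phiG_bound hu hc hδ] with n hn
    refine ae_of_all _ fun x => ?_
    rw [Real.norm_eq_abs, abs_mul, abs_of_nonneg (phiG_nonneg u c k δ n x)]
    exact mul_le_mul (hM x) (hn x) (phiG_nonneg u c k δ n x)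
      ((abs_nonneg _).trans (hM x))
  · have h1 : Integrable (fun x : ℝ => Real.exp (-(c/2) * x ^ 2)) :=
      integrable_exp_neg_mul_sq hc2
    have h2 : Integrable (fun x : ℝ => |x| * Real.exp (-(c/2) * x ^ 2)) := by
      have := (integrable_mul_exp_neg_mul_sq hc2).abs
      refine this.congr (ae_of_all _ fun x => ?_)
      show |x * Real.exp (-(c/2) * x ^ 2)| = |x| * Real.exp (-(c/2) * x ^ 2)
      rw [abs_mul, abs_of_nonneg (Real.exp_pos _).le]
    have := ((h1.const_mul (M * C)).add (h2.const_mul (M * C)))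
    refine this.congr (ae_of_all _ fun x => ?_)
    simp only [Pi.add_apply]
    ring
  · exact Eventually.of_forall fun x =>
      Tendsto.const_mul (g x) (phiG_tendsto hu hδ x)

open Filter in
lemma ellG_main {u c k δ : ℝ} (hu : u ∈ Set.Ioo (0 : ℝ) 1) (hc : 0 < c)
    (hδ : δ ∈ Set.Ioo (0 : ℝ) 1) (g : ℝ → ℝ) (hg : Measurable g) (M : ℝ)
    (hM : ∀ x, |g x| ≤ M * (1 + |x|)) :
    Tendsto (fun n : ℕ => ∫ x, g x * ellG u c k δ n x) atTop
      (nhds (∫ x, g x * gaussDens c x)) := by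
  have hu1 : (0:ℝ) < 1 - u := by linarith [hu.2]
  have hsu : (0:ℝ) < Real.sqrt (u * (1 - u)) := Real.sqrt_pos.mpr (mul_pos hu.1 hu1)
  have hπc : (0:ℝ) < Real.pi / c := div_pos Real.pi_pos hc
  have hsπ : (0:ℝ) < Real.sqrt (Real.pi / c) := Real.sqrt_pos.mpr hπc
  have hG := phiG_main (k := k) hu hc hδ g hg M hM
  have hZ : Tendsto (fun n : ℕ => ∫ x, phiG u c k δ n x) atTop
      (nhds (∫ x, Real.exp (-c * x ^ 2) / Real.sqrt (u * (1 - u)))) := by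
    have := phiG_main (k := k) hu hc hδ (fun _ => 1) measurable_const 1
      (fun x => by rw [abs_one, one_mul]; linarith [abs_nonneg x])
    simpa using this
  have hZval : (∫ x, Real.exp (-c * x ^ 2) / Real.sqrt (u * (1 - u)))
      = Real.sqrt (Real.pi / c) / Real.sqrt (u * (1 - u)) := by
    rw [MeasureTheory.integral_div, integral_gaussian]
  have hZne : (∫ x, Real.exp (-c * x ^ 2) / Real.sqrt (u * (1 - u))) ≠ 0 := by
    rw [hZval]; positivity
  have hdiv := hG.div hZ hZne
  have heq : ∀ n : ℕ, (∫ x, g x * ellG u c k δ n x)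
      = (∫ x, g x * phiG u c k δ n x) / (∫ t, phiG u c k δ n t) := by
    intro n
    rw [← MeasureTheory.integral_div]
    congr 1
    funext x
    unfold ellG
    ring
  have hval : (∫ x, g x * (Real.exp (-c * x ^ 2) / Real.sqrt (u * (1 - u))))
        / (∫ x, Real.exp (-c * x ^ 2) / Real.sqrt (u * (1 - u)))
      = ∫ x, g x * gaussDens c x := by
    have hnum : (∫ x, g x * (Real.exp (-c * x ^ 2) / Real.sqrt (u * (1 - u))))
        = (∫ x, g x * Real.exp (-c * x ^ 2)) / Real.sqrt (u * (1 - u)) := by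
      rw [← MeasureTheory.integral_div]
      congr 1
      funext x
      ring
    have hrhs : (∫ x, g x * gaussDens c x)
        = Real.sqrt (c / Real.pi) * ∫ x, g x * Real.exp (-c * x ^ 2) := by
      rw [← MeasureTheory.integral_const_mul]
      congr 1
      funext x
      unfold gaussDens
      ring
    rw [hnum, hZval, hrhs]
    have hcπ : Real.sqrt (c / Real.pi) = (Real.sqrt (Real.pi / c))⁻¹ := by
      rw [← Real.sqrt_inv, inv_div]
    rw [hcπ]
    have h1 : Real.sqrt u ≠ 0 := ne_of_gt (Real.sqrt_pos.mpr hu.1)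
    have h2 : Real.sqrt (1 - u) ≠ 0 := ne_of_gt (Real.sqrt_pos.mpr hu1)
    have h3 : Real.sqrt Real.pi ≠ 0 := ne_of_gt (Real.sqrt_pos.mpr Real.pi_pos)
    have h4 : Real.sqrt c ≠ 0 := ne_of_gt (Real.sqrt_pos.mpr hc)
    field_simp
  rw [← hval]
  exact hdiv.congr fun n => (heq n).symm

/-- Xₙ with density ℓₙ converges in distribution to N(0, 1/(2c)); moreover
E(Xₙ) → 0 and E|Xₙ| → E|N(0,1/(2c))|. -/
theorem stmt16 (u c k δ : ℝ) (hu : u ∈ Set.Ioo (0 : ℝ) 1) (hc : 0 < c)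
    (hδ : δ ∈ Set.Ioo (0 : ℝ) 1) :
    (∀ f : BoundedContinuousFunction ℝ ℝ,
        Filter.Tendsto (fun n : ℕ => ∫ x, f x * ellG u c k δ n x) Filter.atTop
          (nhds (∫ x, f x * gaussDens c x))) ∧
      Filter.Tendsto (fun n : ℕ => ∫ x, x * ellG u c k δ n x) Filter.atTop
        (nhds 0) ∧
      Filter.Tendsto (fun n : ℕ => ∫ x, |x| * ellG u c k δ n x) Filter.atTop
        (nhds (∫ x, |x| * gaussDens c x)) := by
  refine ⟨fun f => ?_, ?_, ?_⟩
  · refine ellG_main (k := k) hu hc hδ (fun x => f x) f.continuous.measurable ‖f‖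
      (fun x => ?_)
    have h1 : |f x| ≤ ‖f‖ := by
      simpa [Real.norm_eq_abs] using f.norm_coe_le_norm x
    have h2 : (0:ℝ) ≤ ‖f‖ := norm_nonneg f
    nlinarith [abs_nonneg x]
  · have h := ellG_main (k := k) hu hc hδ (fun x => x) measurable_id 1
      (fun x => by rw [one_mul]; linarith [abs_nonneg x])
    have hzero : (∫ x : ℝ, x * gaussDens c x) = 0 := by
      have hodd := integral_neg_eq_self (fun x : ℝ => x * gaussDens c x)
        (volume : Measure ℝ)
      have heq : (fun x : ℝ => (-x) * gaussDens c (-x))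
          = fun x : ℝ => -(x * gaussDens c x) := by
        funext x
        unfold gaussDens
        ring_nf
      rw [heq, MeasureTheory.integral_neg] at hodd
      linarith
    rwa [hzero] at h
  · exact ellG_main (k := k) hu hc hδ (fun x => |x|) continuous_abs.measurable 1
      (fun x => by rw [abs_abs, one_mul]; linarith [abs_nonneg x])
end

section
/- Assume g : [0,1] → ℝ is continuous, attains its maximum at the unique point u* ∈ (0,1), and let a_n(m) be weights with c n^{−1} e^{n² g(m)} ≤ a_n(m) ≤ C n e^{n² g(m)} for all m in the grid Γ_n = {2k/n² : 0 ≤ k ≤ n(n−1)/2}. Then for every δ > 0, (Σ_{m∈Γ_n, |m−u*|≥δ} a_n(m)) / (Σ_{m∈Γ_n} a_n(m)) → 0 exponentially fast as n → ∞, i.e., there exists κ > 0 with the ratio bounded by e^{−κ n²} for large n. -/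
open scoped Classical

/-- Elementary: `x³/27 ≤ exp x` for `x ≥ 0`. -/
lemma cube_le_exp {x : ℝ} (hx : 0 ≤ x) : x ^ 3 / 27 ≤ Real.exp x := by
  have h0 : 0 ≤ x / 3 := by positivity
  have h1 : x / 3 ≤ Real.exp (x / 3) := by
    nlinarith [Real.add_one_le_exp (x / 3)]
  have h2 : (x / 3) ^ 3 ≤ (Real.exp (x / 3)) ^ 3 := pow_le_pow_left₀ h0 h1 3
  have h3 : (Real.exp (x / 3)) ^ 3 = Real.exp x := by
    rw [← Real.exp_nat_mul]
    push_cast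
    ring_nf
  calc x ^ 3 / 27 = (x / 3) ^ 3 := by ring
    _ ≤ (Real.exp (x / 3)) ^ 3 := h2
    _ = Real.exp x := h3

/-- Polynomials lose to `exp (b n²)` eventually. -/
lemma poly_le_exp (A b : ℝ) (hb : 0 < b) :
    ∀ᶠ n : ℕ in Filter.atTop, A * (n : ℝ) ^ 4 ≤ Real.exp (b * (n : ℝ) ^ 2) := by
  obtain ⟨N, hN⟩ := exists_nat_ge (27 * A / b ^ 3 + 1)
  filter_upwards [Filter.eventually_ge_atTop N] with n hn
  have hnR : (27 * A / b ^ 3 + 1 : ℝ) ≤ (n : ℝ) := hN.trans (by exact_mod_cast hn)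
  have hn0 : (0 : ℝ) ≤ (n : ℝ) := Nat.cast_nonneg n
  have hb3 : (0 : ℝ) < b ^ 3 := by positivity
  have hx : (0 : ℝ) ≤ b * (n : ℝ) ^ 2 := by positivity
  have h := cube_le_exp hx
  rcases le_or_gt A 0 with hA | hA
  · have : A * (n : ℝ) ^ 4 ≤ 0 := mul_nonpos_of_nonpos_of_nonneg hA (by positivity)
    exact this.trans (Real.exp_pos _).le
  · have hn1 : (1 : ℝ) ≤ (n : ℝ) := by
      have h0 : (0:ℝ) ≤ 27 * A / b ^ 3 := by positivity
      linarith
    have hbn : 27 * A ≤ b ^ 3 * (n : ℝ) := by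
      have h1 : 27 * A / b ^ 3 ≤ (n : ℝ) := by linarith
      calc 27 * A = (27 * A / b ^ 3) * b ^ 3 := by field_simp
        _ ≤ (n : ℝ) * b ^ 3 := by nlinarith
        _ = b ^ 3 * (n : ℝ) := by ring
    have e1 : 27 * A * (n:ℝ)^4 ≤ b^3 * (n:ℝ)^5 := by nlinarith [pow_nonneg hn0 4]
    have e2 : b^3 * (n:ℝ)^5 ≤ b^3 * (n:ℝ)^6 := by nlinarith [mul_nonneg (mul_nonneg hb3.le (pow_nonneg hn0 5)) (sub_nonneg.mpr hn1)]
    calc A * (n : ℝ) ^ 4 ≤ (b * (n : ℝ) ^ 2) ^ 3 / 27 := by nlinarith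
      _ ≤ Real.exp (b * (n : ℝ) ^ 2) := h

set_option maxHeartbeats 1600000 in
/-- Laplace-type concentration on the grid Γₙ = {2k/n² : 0 ≤ k ≤ n(n−1)/2}: if g is
continuous with strict unique maximizer u* ∈ (0,1), and the weights aₙ(m) satisfy
c n⁻¹ e^{n²g(m)} ≤ aₙ(m) ≤ C n e^{n²g(m)}, then for every δ > 0 the relative weight
of {m : |m − u*| ≥ δ} decays like e^{−κn²}. -/
theorem stmt18 (g : ℝ → ℝ) (u : ℝ) (hu : u ∈ Set.Ioo (0 : ℝ) 1)
    (hg : ContinuousOn g (Set.Icc 0 1))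
    (hmax : ∀ m ∈ Set.Icc (0 : ℝ) 1, m ≠ u → g m < g u)
    (a : ℕ → ℝ → ℝ) (c C : ℝ) (hc : 0 < c) (hC : 0 < C)
    (hbound : ∀ n : ℕ, 2 ≤ n → ∀ k : ℕ, k ≤ n * (n - 1) / 2 →
      c * (n : ℝ)⁻¹ * Real.exp ((n : ℝ) ^ 2 * g (2 * (k : ℝ) / (n : ℝ) ^ 2)) ≤
          a n (2 * (k : ℝ) / (n : ℝ) ^ 2) ∧
        a n (2 * (k : ℝ) / (n : ℝ) ^ 2) ≤
          C * (n : ℝ) * Real.exp ((n : ℝ) ^ 2 * g (2 * (k : ℝ) / (n : ℝ) ^ 2)))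
    (δ : ℝ) (hδ : 0 < δ) :
    ∃ κ > (0 : ℝ), ∀ᶠ n : ℕ in Filter.atTop,
      (∑ k ∈ (Finset.range (n * (n - 1) / 2 + 1)).filter
            fun k => δ ≤ |2 * (k : ℝ) / (n : ℝ) ^ 2 - u|,
          a n (2 * (k : ℝ) / (n : ℝ) ^ 2)) /
        (∑ k ∈ Finset.range (n * (n - 1) / 2 + 1),
          a n (2 * (k : ℝ) / (n : ℝ) ^ 2)) ≤
      Real.exp (-κ * (n : ℝ) ^ 2) := by
  obtain ⟨hu0, hu1⟩ := hu
  -- Step 1: gap ε on the complement of the δ-ball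
  obtain ⟨ε, hε, hA⟩ : ∃ ε > 0, ∀ m ∈ Set.Icc (0:ℝ) 1, δ ≤ |m - u| → g m ≤ g u - ε := by
    have hScl : IsClosed {m : ℝ | δ ≤ |m - u|} :=
      isClosed_le continuous_const (continuous_id.sub continuous_const).abs
    have hScpt : IsCompact (Set.Icc (0:ℝ) 1 ∩ {m | δ ≤ |m - u|}) :=
      isCompact_Icc.inter_right hScl
    rcases Set.eq_empty_or_nonempty (Set.Icc (0:ℝ) 1 ∩ {m | δ ≤ |m - u|}) with hS | hS
    · refine ⟨1, one_pos, fun m hm hm' => absurd ?_ (Set.eq_empty_iff_forall_notMem.mp hS m)⟩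
      exact ⟨hm, hm'⟩
    · obtain ⟨m₀, hm₀S, hm₀max⟩ := hScpt.exists_isMaxOn hS (hg.mono Set.inter_subset_left)
      have hm₀ne : m₀ ≠ u := by
        intro h
        have h2 := hm₀S.2
        rw [h] at h2
        simp only [Set.mem_setOf_eq, sub_self, abs_zero] at h2
        linarith
      have hlt : g m₀ < g u := hmax m₀ hm₀S.1 hm₀ne
      refine ⟨g u - g m₀, by linarith, fun m hm hm' => ?_⟩
      have := hm₀max (⟨hm, hm'⟩ : m ∈ Set.Icc (0:ℝ) 1 ∩ {m | δ ≤ |m - u|})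
      simp only [Set.mem_setOf_eq] at this
      linarith
  -- Step 2: continuity at u
  have hcontu : ContinuousAt g u := hg.continuousAt (Icc_mem_nhds hu0 hu1)
  obtain ⟨η, hη, hηprop⟩ := Metric.continuousAt_iff.mp hcontu (ε/4) (by positivity)
  refine ⟨ε/2, by positivity, ?_⟩
  -- eventual conditions
  have E2 : ∀ᶠ n : ℕ in Filter.atTop, (2:ℝ) < η * (n:ℝ)^2 := by
    obtain ⟨N, hN⟩ := exists_nat_ge (2/η + 1)
    filter_upwards [Filter.eventually_ge_atTop (max N 1)] with n hn
    have hn1 : (1:ℝ) ≤ (n:ℝ) := by exact_mod_cast le_trans (le_max_right N 1) hn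
    have hnN : (2/η + 1 : ℝ) ≤ (n:ℝ) :=
      hN.trans (by exact_mod_cast le_trans (le_max_left N 1) hn)
    have h2η : 2/η * η = 2 := by field_simp
    nlinarith [mul_pos hη (by linarith : (0:ℝ) < (n:ℝ))]
  have E3 : ∀ᶠ n : ℕ in Filter.atTop, u * (n:ℝ) ≤ (n:ℝ) - 1 := by
    obtain ⟨N, hN⟩ := exists_nat_ge (1/(1-u))
    filter_upwards [Filter.eventually_ge_atTop N] with n hn
    have hnN : (1/(1-u) : ℝ) ≤ (n:ℝ) := hN.trans (by exact_mod_cast hn)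
    have h1u : (0:ℝ) < 1 - u := by linarith
    have : 1/(1-u) * (1-u) = 1 := by field_simp
    nlinarith
  have E4 := poly_le_exp (C/c) (ε/4) (by positivity)
  filter_upwards [Filter.eventually_ge_atTop 2, E2, E3, E4] with n h1 h2 h3 h4
  rw [show (do let a ← Finset.range (n * (n - 1) / 2 + 1); pure ((a : ℕ) : ℝ) : Finset ℝ)
      = (Finset.range (n * (n - 1) / 2 + 1)).image (Nat.cast : ℕ → ℝ) by
    simp [Finset.bind_def, Finset.sup_singleton_apply],
    Finset.filter_image,
    Finset.sum_image (fun x _ y _ h => Nat.cast_injective h)]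
  -- basic facts
  have hn0 : (0:ℝ) < (n:ℝ) := by exact_mod_cast Nat.lt_of_lt_of_le Nat.zero_lt_two h1
  have hnsq : (0:ℝ) < (n:ℝ)^2 := by positivity
  have hcast : ((n - 1 : ℕ) : ℝ) = (n:ℝ) - 1 := by
    rw [Nat.cast_sub (le_trans one_le_two h1)]; norm_num
  -- every grid point is in [0,1]
  have hgrid : ∀ k : ℕ, k ≤ n * (n - 1) / 2 → 2 * (k:ℝ) / (n:ℝ)^2 ∈ Set.Icc (0:ℝ) 1 := by
    intro k hk
    have h2k : k * 2 ≤ n * (n - 1) := (Nat.le_div_iff_mul_le Nat.zero_lt_two).mp hk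
    have h2kR : (k:ℝ) * 2 ≤ (n:ℝ) * ((n:ℝ) - 1) := by
      have := (Nat.cast_le (α := ℝ)).mpr h2k
      push_cast at this
      rw [hcast] at this
      linarith
    constructor
    · positivity
    · rw [div_le_one hnsq]; nlinarith
  -- the distinguished grid index near u
  set k₀ : ℕ := Nat.floor (u * (n:ℝ)^2 / 2) with hk₀def
  have hfl : (k₀:ℝ) ≤ u * (n:ℝ)^2 / 2 := Nat.floor_le (by positivity)
  have hfl2 : u * (n:ℝ)^2 / 2 < (k₀:ℝ) + 1 := Nat.lt_floor_add_one _
  clear_value k₀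
  have hk₀le : k₀ ≤ n * (n - 1) / 2 := by
    rw [Nat.le_div_iff_mul_le Nat.zero_lt_two]
    have : (k₀:ℝ) * 2 ≤ ((n:ℝ) - 1) * (n:ℝ) := by nlinarith
    have h2 : ((k₀ * 2 : ℕ) : ℝ) ≤ ((n * (n-1) : ℕ) : ℝ) := by
      push_cast
      rw [hcast]
      nlinarith
    exact_mod_cast h2
  have hm₀le : 2 * (k₀:ℝ) / (n:ℝ)^2 ≤ u := by
    rw [div_le_iff₀ hnsq]; nlinarith
  have hm₀close : u - 2 * (k₀:ℝ) / (n:ℝ)^2 < η := by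
    rw [show u - 2 * (k₀:ℝ) / (n:ℝ)^2 = (u * (n:ℝ)^2 - 2 * (k₀:ℝ)) / (n:ℝ)^2 by
      field_simp]
    rw [div_lt_iff₀ hnsq]
    nlinarith
  have hgm₀ : g u - ε/4 < g (2 * (k₀:ℝ) / (n:ℝ)^2) := by
    have hd : dist (2 * (k₀:ℝ) / (n:ℝ)^2) u < η := by
      rw [Real.dist_eq, abs_sub_comm, abs_of_nonneg (by linarith)]
      exact hm₀close
    have := hηprop hd
    rw [Real.dist_eq] at this
    have := abs_lt.mp this
    linarith [this.1]
  -- denominator lower bound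
  have hterm_nonneg : ∀ k ∈ Finset.range (n * (n - 1) / 2 + 1),
      (0:ℝ) ≤ a n (2 * (k:ℝ) / (n:ℝ)^2) := by
    intro k hk
    have hk' : k ≤ n * (n - 1) / 2 := Nat.lt_succ_iff.mp (Finset.mem_range.mp hk)
    exact le_trans (by positivity) (hbound n h1 k hk').1
  have hden : c * (n:ℝ)⁻¹ * Real.exp ((n:ℝ)^2 * (g u - ε/4)) ≤
      ∑ k ∈ Finset.range (n * (n - 1) / 2 + 1), a n (2 * (k:ℝ) / (n:ℝ)^2) := by
    have hmem : k₀ ∈ Finset.range (n * (n - 1) / 2 + 1) :=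
      Finset.mem_range.mpr (Nat.lt_succ_of_le hk₀le)
    have hsingle := Finset.single_le_sum hterm_nonneg hmem
    refine le_trans (le_trans ?_ (hbound n h1 k₀ hk₀le).1) hsingle
    have : Real.exp ((n:ℝ)^2 * (g u - ε/4)) ≤
        Real.exp ((n:ℝ)^2 * g (2 * (k₀:ℝ) / (n:ℝ)^2)) := by
      exact Real.exp_le_exp.mpr (mul_le_mul_of_nonneg_left hgm₀.le hnsq.le)
    have hcn : (0:ℝ) ≤ c * (n:ℝ)⁻¹ := by positivity
    calc c * (n:ℝ)⁻¹ * Real.exp ((n:ℝ)^2 * (g u - ε/4))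
        ≤ c * (n:ℝ)⁻¹ * Real.exp ((n:ℝ)^2 * g (2 * (k₀:ℝ) / (n:ℝ)^2)) :=
          mul_le_mul_of_nonneg_left this hcn
      _ = _ := rfl
  have hDpos : (0:ℝ) <
      ∑ k ∈ Finset.range (n * (n - 1) / 2 + 1), a n (2 * (k:ℝ) / (n:ℝ)^2) :=
    lt_of_lt_of_le (by positivity) hden
  -- numerator upper bound
  have hnum : (∑ k ∈ (Finset.range (n * (n - 1) / 2 + 1)).filter
        (fun k : ℕ => δ ≤ |2 * (k:ℝ) / (n:ℝ)^2 - u|), a n (2 * (k:ℝ) / (n:ℝ)^2)) ≤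
      (n:ℝ)^2 * (C * (n:ℝ) * Real.exp ((n:ℝ)^2 * (g u - ε))) := by
    have hB : (0:ℝ) ≤ C * (n:ℝ) * Real.exp ((n:ℝ)^2 * (g u - ε)) := by positivity
    have hterm : ∀ k ∈ (Finset.range (n * (n - 1) / 2 + 1)).filter
        (fun k : ℕ => δ ≤ |2 * (k:ℝ) / (n:ℝ)^2 - u|),
        a n (2 * (k:ℝ) / (n:ℝ)^2) ≤ C * (n:ℝ) * Real.exp ((n:ℝ)^2 * (g u - ε)) := by
      intro k hk
      obtain ⟨hkr, hkδ⟩ := Finset.mem_filter.mp hk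
      have hk' : k ≤ n * (n - 1) / 2 := Nat.lt_succ_iff.mp (Finset.mem_range.mp hkr)
      have hub := (hbound n h1 k hk').2
      have hgk : g (2 * (k:ℝ) / (n:ℝ)^2) ≤ g u - ε := hA _ (hgrid k hk') hkδ
      refine hub.trans ?_
      have : Real.exp ((n:ℝ)^2 * g (2 * (k:ℝ) / (n:ℝ)^2)) ≤
          Real.exp ((n:ℝ)^2 * (g u - ε)) := by
        exact Real.exp_le_exp.mpr (mul_le_mul_of_nonneg_left hgk hnsq.le)
      exact mul_le_mul_of_nonneg_left this (by positivity)
    have hsum := Finset.sum_le_card_nsmul _ _ _ hterm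
    rw [nsmul_eq_mul] at hsum
    refine hsum.trans ?_
    have hcard : ((Finset.range (n * (n - 1) / 2 + 1)).filter
        (fun k : ℕ => δ ≤ |2 * (k:ℝ) / (n:ℝ)^2 - u|)).card ≤ n * (n - 1) / 2 + 1 :=
      le_trans (Finset.card_filter_le _ _) (by rw [Finset.card_range])
    have hN1 : n * (n - 1) / 2 + 1 ≤ n * n := by
      have e1 : n * (n - 1) / 2 ≤ n * (n - 1) := Nat.div_le_self _ _
      have e2 : (n - 1) + 1 = n := by omega
      have e3 : n * (n - 1) + n = n * n := by
        calc n * (n - 1) + n = n * ((n - 1) + 1) := by ring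
          _ = n * n := by rw [e2]
      calc n * (n - 1) / 2 + 1 ≤ n * (n - 1) + 1 := Nat.add_le_add_right e1 1
        _ ≤ n * (n - 1) + n := Nat.add_le_add_left (by omega) _
        _ = n * n := e3
    have hcR : (((Finset.range (n * (n - 1) / 2 + 1)).filter
        (fun k : ℕ => δ ≤ |2 * (k:ℝ) / (n:ℝ)^2 - u|)).card : ℝ) ≤ (n:ℝ)^2 := by
      have : (((Finset.range (n * (n - 1) / 2 + 1)).filter
          (fun k : ℕ => δ ≤ |2 * (k:ℝ) / (n:ℝ)^2 - u|)).card : ℝ) ≤ ((n * n : ℕ) : ℝ) :=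
        Nat.cast_le.mpr (le_trans hcard hN1)
      push_cast at this
      nlinarith
    exact mul_le_mul_of_nonneg_right hcR hB
  -- combine
  have hDBpos : (0:ℝ) < c * (n:ℝ)⁻¹ * Real.exp ((n:ℝ)^2 * (g u - ε/4)) := by positivity
  have step1 : (∑ k ∈ (Finset.range (n * (n - 1) / 2 + 1)).filter
        (fun k : ℕ => δ ≤ |2 * (k:ℝ) / (n:ℝ)^2 - u|), a n (2 * (k:ℝ) / (n:ℝ)^2)) /
      (∑ k ∈ Finset.range (n * (n - 1) / 2 + 1), a n (2 * (k:ℝ) / (n:ℝ)^2)) ≤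
      ((n:ℝ)^2 * (C * (n:ℝ) * Real.exp ((n:ℝ)^2 * (g u - ε)))) /
      (c * (n:ℝ)⁻¹ * Real.exp ((n:ℝ)^2 * (g u - ε/4))) :=
    div_le_div₀ (by positivity) hnum hDBpos hden
  refine step1.trans ?_
  -- final algebraic estimate
  rw [div_le_iff₀ hDBpos]
  have key : C * (n:ℝ)^4 * Real.exp (-(ε/4) * (n:ℝ)^2) ≤ c := by
    have h4' : C * (n:ℝ)^4 ≤ Real.exp (ε/4 * (n:ℝ)^2) * c := by
      rw [div_mul_eq_mul_div, div_le_iff₀ hc] at h4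
      exact h4
    calc C * (n:ℝ)^4 * Real.exp (-(ε/4) * (n:ℝ)^2)
        ≤ (Real.exp (ε/4 * (n:ℝ)^2) * c) * Real.exp (-(ε/4) * (n:ℝ)^2) :=
          mul_le_mul_of_nonneg_right h4' (Real.exp_pos _).le
      _ = c * (Real.exp (ε/4 * (n:ℝ)^2) * Real.exp (-(ε/4) * (n:ℝ)^2)) := by ring
      _ = c := by rw [← Real.exp_add]; ring_nf; rw [Real.exp_zero, mul_one]
  have lhs_eq : (n:ℝ)^2 * (C * (n:ℝ) * Real.exp ((n:ℝ)^2 * (g u - ε))) =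
      (C * (n:ℝ)^4 * Real.exp (-(ε/4) * (n:ℝ)^2)) *
      ((n:ℝ)⁻¹ * Real.exp ((n:ℝ)^2 * (g u - ε/4) + (-(ε/2)) * (n:ℝ)^2)) := by
    have hsplit : Real.exp ((n:ℝ)^2 * (g u - ε)) =
        Real.exp (-(ε/4) * (n:ℝ)^2) *
        Real.exp ((n:ℝ)^2 * (g u - ε/4) + (-(ε/2)) * (n:ℝ)^2) := by
      rw [← Real.exp_add]
      congr 1
      ring
    rw [hsplit]
    field_simp
  have rhs_eq : Real.exp (-(ε/2) * (n:ℝ)^2) *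
      (c * (n:ℝ)⁻¹ * Real.exp ((n:ℝ)^2 * (g u - ε/4))) =
      c * ((n:ℝ)⁻¹ * Real.exp ((n:ℝ)^2 * (g u - ε/4) + (-(ε/2)) * (n:ℝ)^2)) := by
    rw [Real.exp_add]
    ring
  rw [lhs_eq, rhs_eq]
  exact mul_le_mul_of_nonneg_right key (by positivity)
end
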